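/- Suppose f satisfies the uncertain one-sided Lipschitz condition (H1): ⟨f(y₁,w₁) − f(y₂,w₂), y₁ − y₂⟩ ≤ λ‖y₁−y₂‖² + γ‖y₁−y₂‖·‖w₁−w₂‖ for all y₁,y₂ and w₁,w₂ ∈ W, with λ < 0 and γ ≥ 0. Let x(·) solve ẋ = f(x, w(t)) with w(t) ∈ W and y(·) solve ẏ = f(y, 0), 0 ∈ W. Then for all t ≥ 0, ‖x(t) − y(t)‖ ≤ e^{λt}‖x(0) − y(0)‖ + (γ·|W|/(−λ))·(1 − e^{λt}), where |W| is the diameter of W. -/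

import Mathlib

open RealInnerProductSpace

theorem stmt12 (n m : ℕ)
    (f : EuclideanSpace ℝ (Fin n) → EuclideanSpace ℝ (Fin m) → EuclideanSpace ℝ (Fin n))
    (W : Set (EuclideanSpace ℝ (Fin m))) (hWc : IsCompact W) (hW0 : (0 : EuclideanSpace ℝ (Fin m)) ∈ W)
    (lam γ : ℝ) (hlam : lam < 0) (hγ : 0 ≤ γ)
    (hH1 : ∀ y₁ y₂ : EuclideanSpace ℝ (Fin n), ∀ w₁ ∈ W, ∀ w₂ ∈ W,
      ⟪f y₁ w₁ - f y₂ w₂, y₁ - y₂⟫ ≤ lam * ‖y₁ - y₂‖^2 + γ * ‖y₁ - y₂‖ * ‖w₁ - w₂‖)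
    (w : ℝ → EuclideanSpace ℝ (Fin m)) (hw : ∀ t : ℝ, 0 ≤ t → w t ∈ W)
    (x y : ℝ → EuclideanSpace ℝ (Fin n))
    (hx : ∀ t : ℝ, 0 ≤ t → HasDerivAt x (f (x t) (w t)) t)
    (hy : ∀ t : ℝ, 0 ≤ t → HasDerivAt y (f (y t) 0) t) :
    ∀ t : ℝ, 0 ≤ t →
      ‖x t - y t‖ ≤ Real.exp (lam * t) * ‖x 0 - y 0‖ +
        (γ * Metric.diam W / (-lam)) * (1 - Real.exp (lam * t)) := by
  intro t ht
  set D := Metric.diam W with hDdef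
  have hD : 0 ≤ D := Metric.diam_nonneg
  set u : ℝ → EuclideanSpace ℝ (Fin n) := fun s => x s - y s with hu
  set v : ℝ → EuclideanSpace ℝ (Fin n) := fun s => f (x s) (w s) - f (y s) 0 with hv
  have hud : ∀ s : ℝ, 0 ≤ s → HasDerivAt u (v s) s := fun s hs => (hx s hs).sub (hy s hs)
  -- inner product bound
  have hinner : ∀ s : ℝ, 0 ≤ s → ⟪u s, v s⟫ ≤ lam * ‖u s‖^2 + γ * ‖u s‖ * D := by
    intro s hs
    have h1 := hH1 (x s) (y s) (w s) (hw s hs) 0 hW0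
    have hwd : ‖w s - 0‖ ≤ D := by
      rw [sub_zero, ← dist_zero_right]
      exact Metric.dist_le_diam_of_mem hWc.isBounded (hw s hs) hW0
    have := real_inner_comm (u s) (v s)
    calc ⟪u s, v s⟫ = ⟪v s, u s⟫ := real_inner_comm _ _
      _ ≤ lam * ‖u s‖^2 + γ * ‖u s‖ * ‖w s - 0‖ := h1
      _ ≤ lam * ‖u s‖^2 + γ * ‖u s‖ * D := by
          nlinarith [mul_nonneg hγ (norm_nonneg (u s))]
  -- main ε-approximation step
  have key : ∀ ε : ℝ, 0 < ε →
      ‖u t‖ ≤ Real.sqrt (‖u 0‖^2 + ε) * Real.exp (lam * t) +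
        (γ * D + (-lam) * Real.sqrt ε) / lam * (Real.exp (lam * t) - 1) := by
    intro ε hε
    set ψ : ℝ → ℝ := fun s => Real.sqrt (‖u s‖^2 + ε) with hψ
    have hψpos : ∀ s, 0 < ψ s := fun s => Real.sqrt_pos.2 (by positivity)
    have hψge : ∀ s, ‖u s‖ ≤ ψ s := by
      intro s
      have h := Real.sqrt_le_sqrt (show ‖u s‖^2 ≤ ‖u s‖^2 + ε by linarith)
      rwa [Real.sqrt_sq (norm_nonneg _)] at h
    have hψgeε : ∀ s, Real.sqrt ε ≤ ψ s := by
      intro s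
      exact Real.sqrt_le_sqrt (by nlinarith [sq_nonneg ‖u s‖])
    have hψsq : ∀ s, (ψ s)^2 = ‖u s‖^2 + ε := fun s => Real.sq_sqrt (by positivity)
    -- derivative of ψ
    have hψd : ∀ s : ℝ, 0 ≤ s → HasDerivAt ψ (⟪u s, v s⟫ / ψ s) s := by
      intro s hs
      have h1 : HasDerivAt (fun r => ‖u r‖^2 + ε) (2 * ⟪u s, v s⟫) s :=
        ((hud s hs).norm_sq).add_const ε
      have h2 : HasDerivAt Real.sqrt (1 / (2 * Real.sqrt (‖u s‖^2 + ε))) (‖u s‖^2 + ε) :=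
        Real.hasDerivAt_sqrt (by positivity)
      have := h2.comp s h1
      convert this using 1
      case e'_4 => rfl
      case e'_5 => rfl
      case e'_8 => rfl
      have hne : ψ s ≠ 0 := (hψpos s).ne'
      rw [show ψ s = Real.sqrt (‖u s‖^2 + ε) from rfl] at hne ⊢
      field_simp
    have hc : ContinuousOn ψ (Set.Icc 0 t) := by
      intro s hs
      exact ((hψd s hs.1).continuousAt).continuousWithinAt
    set c : ℝ := γ * D + (-lam) * Real.sqrt ε with hc'
    have bound : ∀ s ∈ Set.Ico (0:ℝ) t, ⟪u s, v s⟫ / ψ s ≤ lam * ψ s + c := by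
      intro s hs
      rw [div_le_iff₀ (hψpos s)]
      have h1 := hinner s hs.1
      have h2 : lam * ‖u s‖^2 = lam * (ψ s)^2 + (-lam) * ε := by
        rw [hψsq s]; ring
      have h3 : γ * ‖u s‖ * D ≤ γ * ψ s * D := by
        gcongr; exact hψge s
      have h4 : (-lam) * ε ≤ (-lam) * Real.sqrt ε * ψ s := by
        have hss : Real.sqrt ε * Real.sqrt ε = ε := Real.mul_self_sqrt hε.le
        nlinarith [hψgeε s, Real.sqrt_nonneg ε, hlam.le,
          mul_nonneg (mul_nonneg (neg_nonneg.2 hlam.le) (Real.sqrt_nonneg ε))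
            (sub_nonneg.2 (hψgeε s))]
      nlinarith [hψpos s]
    have grw := le_gronwallBound_of_liminf_deriv_right_le (f := ψ)
      (f' := fun s => ⟪u s, v s⟫ / ψ s) (δ := ψ 0) (K := lam) (ε := c) (a := 0) (b := t)
      hc
      (fun s hs r hr => ((hψd s hs.1).hasDerivWithinAt (s := Set.Ici s)).liminf_right_slope_le hr)
      le_rfl bound t (Set.mem_Icc.2 ⟨ht, le_rfl⟩)
    rw [gronwallBound_of_K_ne_0 hlam.ne] at grw
    simp only [sub_zero] at grw
    calc ‖u t‖ ≤ ψ t := hψge t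
      _ ≤ ψ 0 * Real.exp (lam * t) + c / lam * (Real.exp (lam * t) - 1) := grw
      _ = _ := by rw [hψ, hc']
  -- take ε → 0⁺
  set F : ℝ → ℝ := fun ε => Real.sqrt (‖u 0‖^2 + ε) * Real.exp (lam * t) +
      (γ * D + (-lam) * Real.sqrt ε) / lam * (Real.exp (lam * t) - 1) with hF
  have hFcont : ContinuousAt F 0 := by
    apply ContinuousAt.add
    · exact (Real.continuous_sqrt.continuousAt.comp
        (continuousAt_const.add continuousAt_id)).mul continuousAt_const
    · exact (((continuousAt_const.add
        (continuousAt_const.mul Real.continuous_sqrt.continuousAt)).div_const lam).mul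
        continuousAt_const)
  have hF0 : F 0 = ‖u 0‖ * Real.exp (lam * t) + (γ * D / lam) * (Real.exp (lam * t) - 1) := by
    simp [hF, Real.sqrt_sq (norm_nonneg _)]
  have hle : ‖u t‖ ≤ F 0 := by
    have htend : Filter.Tendsto F (nhdsWithin 0 (Set.Ioi 0)) (nhds (F 0)) :=
      (hFcont.continuousWithinAt).tendsto
    refine ge_of_tendsto htend ?_
    filter_upwards [self_mem_nhdsWithin] with ε hε
    exact key ε hε
  rw [hF0] at hle
  have heq : ‖u 0‖ * Real.exp (lam * t) + (γ * D / lam) * (Real.exp (lam * t) - 1) =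
      Real.exp (lam * t) * ‖u 0‖ + (γ * D / (-lam)) * (1 - Real.exp (lam * t)) := by
    field_simp
    ring
  rw [heq] at hle
  exact hle
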